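/- Let f be a polynomial vector field on ℝ^n and p a polynomial. Define Lie derivatives inductively by L⁰_f p = p and L^k_f p = ⟨∇(L^{k-1}_f p), f⟩. If for some index i the polynomial L^{i+1}_f p belongs to the ideal ⟨L⁰_f p, L¹_f p, …, L^i_f p⟩ in ℝ[x_1,…,x_n], then for every m > i the polynomial L^m_f p belongs to the same ideal ⟨L⁰_f p, …, L^i_f p⟩. -/
import Mathlib


open MvPolynomial

/-- The Lie derivative of a polynomial `p` along the polynomial vector field `f`:
`⟨∇p, f⟩ = ∑ j, (∂p/∂x_j) * f_j`. -/
noncomputable def lieDeriv {n : ℕ} (f : Fin n → MvPolynomial (Fin n) ℝ)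
    (p : MvPolynomial (Fin n) ℝ) : MvPolynomial (Fin n) ℝ :=
  ∑ j, MvPolynomial.pderiv j p * f j

/-- Iterated Lie derivatives: `lieIter f k p = L^k_f p`. -/
noncomputable def lieIter {n : ℕ} (f : Fin n → MvPolynomial (Fin n) ℝ)
    (k : ℕ) (p : MvPolynomial (Fin n) ℝ) : MvPolynomial (Fin n) ℝ :=
  match k with
  | 0 => p
  | k + 1 => lieDeriv f (lieIter f k p)

lemma lieDeriv_add {n : ℕ} (f : Fin n → MvPolynomial (Fin n) ℝ)
    (a b : MvPolynomial (Fin n) ℝ) :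
    lieDeriv f (a + b) = lieDeriv f a + lieDeriv f b := by
  simp [lieDeriv, add_mul, Finset.sum_add_distrib]

lemma lieDeriv_zero {n : ℕ} (f : Fin n → MvPolynomial (Fin n) ℝ) :
    lieDeriv f 0 = 0 := by simp [lieDeriv]

lemma lieDeriv_mul {n : ℕ} (f : Fin n → MvPolynomial (Fin n) ℝ)
    (a b : MvPolynomial (Fin n) ℝ) :
    lieDeriv f (a * b) = lieDeriv f a * b + a * lieDeriv f b := by
  unfold lieDeriv
  rw [Finset.mul_sum, Finset.sum_mul, ← Finset.sum_add_distrib]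
  refine Finset.sum_congr rfl fun j _ => ?_
  rw [pderiv_mul]; ring

theorem lie_derivative_fixed_point
    {n : ℕ} (f : Fin n → MvPolynomial (Fin n) ℝ) (p : MvPolynomial (Fin n) ℝ)
    (i : ℕ)
    (h : lieIter f (i + 1) p ∈
      Ideal.span {q | ∃ j ≤ i, q = lieIter f j p}) :
    ∀ m, i < m → lieIter f m p ∈ Ideal.span {q | ∃ j ≤ i, q = lieIter f j p} := by
  set I : Ideal (MvPolynomial (Fin n) ℝ) :=
    Ideal.span {q | ∃ j ≤ i, q = lieIter f j p} with hI
  -- key closure property: I is invariant under lieDeriv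
  have key : ∀ x ∈ I, lieDeriv f x ∈ I := by
    intro x hx
    have : x ∈ I ∧ lieDeriv f x ∈ I := by
      refine Submodule.span_induction ?_ ?_ ?_ ?_ hx
      · rintro q ⟨j, hj, rfl⟩
        constructor
        · exact Ideal.subset_span ⟨j, hj, rfl⟩
        · rcases lt_or_eq_of_le hj with hlt | rfl
          · exact Ideal.subset_span ⟨j + 1, hlt, rfl⟩
          · exact h
      · simp [lieDeriv_zero]
      · intro a b _ _ ⟨ha, ha'⟩ ⟨hb, hb'⟩
        exact ⟨I.add_mem ha hb, by rw [lieDeriv_add]; exact I.add_mem ha' hb'⟩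
      · intro c x _ ⟨hx1, hx2⟩
        refine ⟨I.smul_mem c hx1, ?_⟩
        rw [smul_eq_mul, lieDeriv_mul]
        exact I.add_mem (I.mul_mem_left _ hx1) (I.mul_mem_left _ hx2)
    exact this.2
  intro m hm
  induction m with
  | zero => omega
  | succ k ih =>
    rcases Nat.lt_or_ge i k with hk | hk
    · exact key _ (ih hk)
    · have : k = i := by omega
      subst this
      exact h
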